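/- Let f be an NΛ-periodic function of x₁ decomposed as f(x₁,x₂) = Σ_{ℓ=1}^{N} exp(2πiℓx₁/(NΛ)) f_ℓ(x₁,x₂) with each f_ℓ Λ-periodic in x₁. Let u : ℝ² → ℂ be compactly supported and let w = Ju be its Λ-periodic Bloch transform, (Ju)(α,x) = C_Λ Σ_{j∈ℤ} u(x₁+Λj,x₂) e^{−iαΛj}. Then J(f·u)(α,x) = Σ_{ℓ=1}^{N} w(α − 2πℓ/(NΛ), x) exp(2πiℓx₁/(NΛ)) f_ℓ(x), where w is extended 2π/Λ-periodically in α. -/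

import Mathlib

open MeasureTheory Real Complex

/-- The partial Floquet–Bloch transform with period `Λ` in the `x₁`-direction. -/
noncomputable def blochT (Λ : ℝ) (φ : ℝ × ℝ → ℂ) (α : ℝ) (x : ℝ × ℝ) : ℂ :=
  Real.sqrt (Λ / (2 * π)) *
    ∑' j : ℤ, φ (x.1 + Λ * j, x.2) * Complex.exp (-(Complex.I * α * (Λ * j)))

private lemma finite_support_aux (Λ : ℝ) (hΛ : 0 < Λ) (u : ℝ × ℝ → ℂ)
    (hus : HasCompactSupport u) (x : ℝ × ℝ) :
    (Function.support fun j : ℤ => u (x.1 + Λ * j, x.2)).Finite := by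
  obtain ⟨R, hR⟩ := hus.isBounded.subset_closedBall 0
  have hM : ∀ j : ℤ, u (x.1 + Λ * j, x.2) ≠ 0 → |(j : ℝ)| ≤ (R + |x.1|) / Λ := by
    intro j hj
    have hmem : (x.1 + Λ * j, x.2) ∈ tsupport u := subset_closure (by exact hj)
    have := hR hmem
    rw [Metric.mem_closedBall, dist_zero_right, Prod.norm_def] at this
    have h1 : |x.1 + Λ * j| ≤ R := le_trans (le_max_left _ _) this
    have h2 : |Λ * (j:ℝ)| ≤ R + |x.1| := by
      have := abs_add_le (x.1 + Λ * j) (-x.1)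
      rw [show x.1 + Λ * (j:ℝ) + -x.1 = Λ * j by ring, abs_neg] at this
      linarith
    rw [abs_mul, abs_of_pos hΛ] at h2
    rw [le_div_iff₀ hΛ]
    linarith
  set M : ℤ := ⌈(R + |x.1|) / Λ⌉ with hMdef
  apply Set.Finite.subset (Set.finite_Icc (-M) M)
  intro j hj
  have hb := hM j hj
  have : |(j : ℝ)| ≤ (M : ℝ) := le_trans hb (Int.le_ceil _)
  rw [← Int.cast_abs, Int.cast_le] at this
  simp only [Set.mem_Icc]
  constructor <;> [linarith [neg_abs_le j]; linarith [le_abs_self j]]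

/-- Multiplying by an `NΛ`-periodic coefficient `f = Σ_{ℓ=1}^N e^{2πiℓx₁/(NΛ)} f_ℓ`
(with each `f_ℓ` Λ-periodic in `x₁`) shifts the Bloch variable:
`J(f·u)(α,x) = Σ_{ℓ=1}^N (Ju)(α − 2πℓ/(NΛ), x) e^{2πiℓx₁/(NΛ)} f_ℓ(x)`. -/
theorem bloch_of_periodic_multiplication
    (N : ℕ) (hN : 0 < N) (Λ : ℝ) (hΛ : 0 < Λ)
    (f : ℝ × ℝ → ℂ) (fℓ : ℕ → ℝ × ℝ → ℂ)
    (hper : ∀ ℓ ∈ Finset.Icc 1 N, ∀ x : ℝ × ℝ, fℓ ℓ (x.1 + Λ, x.2) = fℓ ℓ x)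
    (hf : ∀ x : ℝ × ℝ, f x = ∑ ℓ ∈ Finset.Icc 1 N,
      Complex.exp (2 * π * Complex.I * ℓ * x.1 / (N * Λ)) * fℓ ℓ x)
    (u : ℝ × ℝ → ℂ) (hu : Continuous u) (hus : HasCompactSupport u) :
    ∀ (α : ℝ) (x : ℝ × ℝ),
      blochT Λ (fun y => f y * u y) α x =
        ∑ ℓ ∈ Finset.Icc 1 N,
          blochT Λ u (α - 2 * π * ℓ / (N * Λ)) x *
            Complex.exp (2 * π * Complex.I * ℓ * x.1 / (N * Λ)) * fℓ ℓ x := by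
  intro α x
  have hΛ' : (Λ : ℂ) ≠ 0 := Complex.ofReal_ne_zero.mpr hΛ.ne'
  have hN' : (N : ℂ) ≠ 0 := Nat.cast_ne_zero.mpr hN.ne'
  -- periodicity of fℓ along integer multiples of Λ
  have hfl : ∀ ℓ ∈ Finset.Icc 1 N, ∀ j : ℤ, fℓ ℓ (x.1 + Λ * j, x.2) = fℓ ℓ x := by
    intro ℓ hℓ j
    have hstep : ∀ t : ℝ, fℓ ℓ (t + Λ, x.2) = fℓ ℓ (t, x.2) := fun t => hper ℓ hℓ (t, x.2)
    induction j using Int.induction_on with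
    | zero => simp
    | succ k ih =>
      push_cast at ih ⊢
      rw [show x.1 + Λ * ((k : ℝ) + 1) = (x.1 + Λ * k) + Λ by ring, hstep]
      exact ih
    | pred k ih =>
      push_cast at ih ⊢
      have h2 := hstep (x.1 + Λ * (-(k : ℝ) - 1))
      rw [show x.1 + Λ * (-(k : ℝ) - 1) + Λ = x.1 + Λ * (-(k:ℝ)) by ring] at h2
      rw [← h2]
      exact ih
  -- finite support of the summand
  have hfin := finite_support_aux Λ hΛ u hus x
  -- summability of each shifted Bloch summand pieces
  have hsum : ∀ c : ℤ → ℂ, Summable (fun j : ℤ => u (x.1 + Λ * j, x.2) * c j) := by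
    intro c
    apply summable_of_ne_finset_zero (s := hfin.toFinset)
    intro j hj
    have : u (x.1 + Λ * j, x.2) = 0 := by
      by_contra h
      exact hj (hfin.mem_toFinset.mpr h)
    rw [this, zero_mul]
  -- pointwise identity for each j
  have hpt : ∀ j : ℤ,
      (f (x.1 + Λ * j, x.2) * u (x.1 + Λ * j, x.2)) * Complex.exp (-(Complex.I * α * (Λ * j))) =
      ∑ ℓ ∈ Finset.Icc 1 N,
        (u (x.1 + Λ * j, x.2) *
            Complex.exp (-(Complex.I * ((α - 2 * π * ℓ / (N * Λ) : ℝ) : ℂ) * (Λ * j)))) *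
          (Complex.exp (2 * π * Complex.I * ℓ * x.1 / (N * Λ)) * fℓ ℓ x) := by
    intro j
    rw [hf (x.1 + Λ * j, x.2), Finset.sum_mul, Finset.sum_mul]
    apply Finset.sum_congr rfl
    intro ℓ hℓ
    rw [hfl ℓ hℓ j]
    have hexp : Complex.exp (2 * π * Complex.I * ℓ * ((x.1 : ℂ) + Λ * j) / (N * Λ)) *
        Complex.exp (-(Complex.I * α * (Λ * j))) =
        Complex.exp (-(Complex.I * ((α - 2 * π * ℓ / (N * Λ) : ℝ) : ℂ) * (Λ * j))) *
        Complex.exp (2 * π * Complex.I * ℓ * x.1 / (N * Λ)) := by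
      rw [← Complex.exp_add, ← Complex.exp_add]
      congr 1
      push_cast
      field_simp
      ring
    push_cast at hexp ⊢
    calc _ = (Complex.exp (2 * π * Complex.I * ℓ * ((x.1 : ℂ) + Λ * j) / (N * Λ)) *
          Complex.exp (-(Complex.I * α * (Λ * j)))) * (fℓ ℓ x * u (x.1 + Λ * j, x.2)) := by
            ring
      _ = _ := by rw [hexp]; ring
  -- assemble
  unfold blochT
  rw [tsum_congr hpt, Summable.tsum_finsetSum (fun ℓ _ => by
    have := hsum (fun j => Complex.exp (-(Complex.I * ((α - 2 * π * ℓ / (N * Λ) : ℝ) : ℂ) * (Λ * j))))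
    exact (this.mul_right _))]
  rw [Finset.mul_sum]
  apply Finset.sum_congr rfl
  intro ℓ hℓ
  rw [tsum_mul_right]
  ring
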